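/- The subring of ℂ generated by the two elements 1/√2 and i is exactly the set {a + b·i + c·√2 + d·i·√2 : a, b, c, d ∈ 𝔻}, where 𝔻 denotes the ring of dyadic rationals. In other words, ℤ[1/√2, i] = {a + b·i + c·√2 + d·i·√2 : a, b, c, d ∈ 𝔻}. -/

import Mathlib

/-- A real number is a dyadic rational if it equals `m / 2 ^ k` for some `m : ℤ`, `k : ℕ`. -/
def IsDyadic (x : ℝ) : Prop := ∃ (m : ℤ) (k : ℕ), x = (m : ℝ) / 2 ^ k

lemma isDyadic_intCast (n : ℤ) : IsDyadic (n : ℝ) := ⟨n, 0, by simp⟩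

lemma IsDyadic.add {x y : ℝ} (hx : IsDyadic x) (hy : IsDyadic y) : IsDyadic (x + y) := by
  obtain ⟨m, k, rfl⟩ := hx
  obtain ⟨n, l, rfl⟩ := hy
  refine ⟨m * 2 ^ l + n * 2 ^ k, k + l, ?_⟩
  have hk : (2:ℝ) ^ k ≠ 0 := by positivity
  have hl : (2:ℝ) ^ l ≠ 0 := by positivity
  field_simp [pow_add]
  push_cast
  ring

lemma IsDyadic.neg {x : ℝ} (hx : IsDyadic x) : IsDyadic (-x) := by
  obtain ⟨m, k, rfl⟩ := hx
  exact ⟨-m, k, by push_cast; ring⟩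

lemma IsDyadic.sub {x y : ℝ} (hx : IsDyadic x) (hy : IsDyadic y) : IsDyadic (x - y) := by
  simpa [sub_eq_add_neg] using hx.add hy.neg

lemma IsDyadic.mul {x y : ℝ} (hx : IsDyadic x) (hy : IsDyadic y) : IsDyadic (x * y) := by
  obtain ⟨m, k, rfl⟩ := hx
  obtain ⟨n, l, rfl⟩ := hy
  exact ⟨m * n, k + l, by push_cast; rw [div_mul_div_comm, pow_add]⟩

lemma mul_key (s t : ℂ) (hs : s * s = 2) (ht : t * t = -1)
    (a b c d a' b' c' d' : ℂ) :
    (a + b * t + c * s + d * t * s) * (a' + b' * t + c' * s + d' * t * s) =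
      (a * a' - b * b' + 2 * (c * c') - 2 * (d * d')) +
        (a * b' + b * a' + 2 * (c * d') + 2 * (d * c')) * t +
        (a * c' + c * a' - (b * d' + d * b')) * s +
        (a * d' + d * a' + b * c' + c * b') * t * s := by
  linear_combination (c * c' + d * d' * (t * t) + (c * d' + d * c') * t) * hs +
    (b * b' + 2 * d * d' + (b * d' + d * b') * s) * ht

theorem subring_closure_inv_sqrt2_I :
    (Subring.closure ({((Real.sqrt 2 : ℂ))⁻¹, Complex.I} : Set ℂ) : Set ℂ) =
      {z : ℂ | ∃ a b c d : ℝ, IsDyadic a ∧ IsDyadic b ∧ IsDyadic c ∧ IsDyadic d ∧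
        z = (a : ℂ) + (b : ℂ) * Complex.I + (c : ℂ) * (Real.sqrt 2 : ℂ) +
            (d : ℂ) * Complex.I * (Real.sqrt 2 : ℂ)} := by
  have hsne : ((Real.sqrt 2 : ℝ) : ℂ) ≠ 0 := by
    exact Complex.ofReal_ne_zero.mpr (by positivity : (0:ℝ) < Real.sqrt 2).ne'
  have hss : ((Real.sqrt 2 : ℝ) : ℂ) * ((Real.sqrt 2 : ℝ) : ℂ) = 2 := by
    rw [← Complex.ofReal_mul, Real.mul_self_sqrt (by norm_num)]
    norm_num
  have hinv : ((Real.sqrt 2 : ℝ) : ℂ)⁻¹ ∈ Subring.closure ({((Real.sqrt 2 : ℂ))⁻¹, Complex.I} : Set ℂ) :=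
    Subring.subset_closure (Set.mem_insert _ _)
  have hI : Complex.I ∈ Subring.closure ({((Real.sqrt 2 : ℂ))⁻¹, Complex.I} : Set ℂ) :=
    Subring.subset_closure (Set.mem_insert_of_mem _ rfl)
  have hhalf : ((2 : ℂ))⁻¹ ∈ Subring.closure ({((Real.sqrt 2 : ℂ))⁻¹, Complex.I} : Set ℂ) := by
    have : ((Real.sqrt 2 : ℝ) : ℂ)⁻¹ * ((Real.sqrt 2 : ℝ) : ℂ)⁻¹ = (2 : ℂ)⁻¹ := by
      rw [← mul_inv, hss]
    exact this ▸ Subring.mul_mem _ hinv hinv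
  have hsqrt : ((Real.sqrt 2 : ℝ) : ℂ) ∈ Subring.closure ({((Real.sqrt 2 : ℂ))⁻¹, Complex.I} : Set ℂ) := by
    have h2 : ((Real.sqrt 2 : ℝ) : ℂ) = 2 * ((Real.sqrt 2 : ℝ) : ℂ)⁻¹ := by
      rw [eq_mul_inv_iff_mul_eq₀ hsne]
      exact hss
    have := Subring.mul_mem _ (natCast_mem _ 2) hinv
    push_cast at this
    rwa [← h2] at this
  have hdy : ∀ x : ℝ, IsDyadic x →
      (x : ℂ) ∈ Subring.closure ({((Real.sqrt 2 : ℂ))⁻¹, Complex.I} : Set ℂ) := by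
    rintro x ⟨m, k, rfl⟩
    have : ((m : ℝ) / 2 ^ k : ℝ) = ((m : ℂ) * ((2 : ℂ)⁻¹) ^ k : ℂ) := by
      push_cast
      rw [div_eq_mul_inv, inv_pow]
    rw [this]
    exact Subring.mul_mem _ (intCast_mem _ m) (Subring.pow_mem _ hhalf k)
  ext z
  simp only [SetLike.mem_coe, Set.mem_setOf_eq]
  constructor
  · intro hz
    induction hz using Subring.closure_induction with
    | mem x hx =>
      rcases hx with rfl | rfl
      · refine ⟨0, 0, 1/2, 0, ⟨0, 0, by norm_num⟩, ⟨0, 0, by norm_num⟩, ⟨1, 1, by norm_num⟩,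
          ⟨0, 0, by norm_num⟩, ?_⟩
        rw [eq_comm]
        simp only [add_zero, Complex.ofReal_zero, zero_mul, zero_add, mul_zero]
        rw [inv_eq_one_div, eq_div_iff hsne]
        push_cast
        linear_combination hss / 2
      · exact ⟨0, 1, 0, 0, ⟨0, 0, by norm_num⟩, ⟨1, 0, by norm_num⟩, ⟨0, 0, by norm_num⟩,
          ⟨0, 0, by norm_num⟩, by push_cast; ring⟩
    | zero =>
      exact ⟨0, 0, 0, 0, ⟨0, 0, by norm_num⟩, ⟨0, 0, by norm_num⟩, ⟨0, 0, by norm_num⟩,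
        ⟨0, 0, by norm_num⟩, by push_cast; ring⟩
    | one =>
      exact ⟨1, 0, 0, 0, ⟨1, 0, by norm_num⟩, ⟨0, 0, by norm_num⟩, ⟨0, 0, by norm_num⟩,
        ⟨0, 0, by norm_num⟩, by push_cast; ring⟩
    | add x y _ _ ihx ihy =>
      obtain ⟨a, b, c, d, ha, hb, hc, hd, rfl⟩ := ihx
      obtain ⟨a', b', c', d', ha', hb', hc', hd', rfl⟩ := ihy
      exact ⟨a + a', b + b', c + c', d + d', ha.add ha', hb.add hb', hc.add hc', hd.add hd',
        by push_cast; ring⟩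
    | neg x _ ihx =>
      obtain ⟨a, b, c, d, ha, hb, hc, hd, rfl⟩ := ihx
      exact ⟨-a, -b, -c, -d, ha.neg, hb.neg, hc.neg, hd.neg, by push_cast; ring⟩
    | mul x y _ _ ihx ihy =>
      obtain ⟨a, b, c, d, ha, hb, hc, hd, rfl⟩ := ihx
      obtain ⟨a', b', c', d', ha', hb', hc', hd', rfl⟩ := ihy
      refine ⟨a * a' - b * b' + 2 * (c * c') - 2 * (d * d'),
        a * b' + b * a' + 2 * (c * d') + 2 * (d * c'),
        a * c' + c * a' - (b * d' + d * b'),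
        a * d' + d * a' + b * c' + c * b', ?_, ?_, ?_, ?_, ?_⟩
      · exact ((ha.mul ha').sub (hb.mul hb')).add ((isDyadic_intCast 2).mul (hc.mul hc'))
          |>.sub ((isDyadic_intCast 2).mul (hd.mul hd'))
      · exact (((ha.mul hb').add (hb.mul ha')).add ((isDyadic_intCast 2).mul (hc.mul hd'))).add
          ((isDyadic_intCast 2).mul (hd.mul hc'))
      · exact ((ha.mul hc').add (hc.mul ha')).sub ((hb.mul hd').add (hd.mul hb'))
      · exact (((ha.mul hd').add (hd.mul ha')).add (hb.mul hc')).add (hc.mul hb')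
      · push_cast
        exact mul_key _ _ hss Complex.I_mul_I _ _ _ _ _ _ _ _
  · rintro ⟨a, b, c, d, ha, hb, hc, hd, rfl⟩
    exact Subring.add_mem _ (Subring.add_mem _ (Subring.add_mem _ (hdy a ha)
      (Subring.mul_mem _ (hdy b hb) hI)) (Subring.mul_mem _ (hdy c hc) hsqrt))
      (Subring.mul_mem _ (Subring.mul_mem _ (hdy d hd) hI) hsqrt)
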